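/- Let l, A ∈ M_d(ℝ) be entrywise nonnegative and assume l^n ⪯ l for every integer n ≥ 1. Then exp(l ⊙ A) − I_d ⪯ l ⊙ (exp(A) − I_d). -/

import Mathlib

open Matrix

attribute [local instance] Matrix.linftyOpNormedRing Matrix.linftyOpNormedAlgebra

private lemma pow_entry_nonneg {d : ℕ} (A : Matrix (Fin d) (Fin d) ℝ)
    (hA : ∀ i j, 0 ≤ A i j) (n : ℕ) : ∀ i j, 0 ≤ (A ^ n) i j := by
  induction n with
  | zero => intro i j; simp [Matrix.one_apply]; positivity
  | succ n ih =>
    intro i j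
    rw [pow_succ, Matrix.mul_apply]
    exact Finset.sum_nonneg fun k _ => mul_nonneg (ih i k) (hA k j)

private lemma hadamard_pow_le {d : ℕ} (l A : Matrix (Fin d) (Fin d) ℝ)
    (hl : ∀ i j, 0 ≤ l i j) (hA : ∀ i j, 0 ≤ A i j) (n : ℕ) :
    ∀ i j, ((Matrix.hadamard l A) ^ (n + 1)) i j ≤ (l ^ (n + 1)) i j * (A ^ (n + 1)) i j := by
  induction n with
  | zero => intro i j; simp [Matrix.hadamard_apply]
  | succ n ih =>
    intro i j
    rw [pow_succ, Matrix.mul_apply]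
    have key : ∀ k : Fin d, ((Matrix.hadamard l A) ^ (n + 1)) i k * (Matrix.hadamard l A) k j ≤
        (l ^ (n + 2)) i j * ((A ^ (n + 1)) i k * A k j) := by
      intro k
      have h1 : ((Matrix.hadamard l A) ^ (n + 1)) i k * (Matrix.hadamard l A) k j ≤
          ((l ^ (n + 1)) i k * (A ^ (n + 1)) i k) * (l k j * A k j) := by
        apply mul_le_mul (ih i k) le_rfl
        · exact mul_nonneg (hl k j) (hA k j)
        · exact mul_nonneg (pow_entry_nonneg l hl _ i k) (pow_entry_nonneg A hA _ i k)
      refine h1.trans ?_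
      have h2 : (l ^ (n + 1)) i k * l k j ≤ (l ^ (n + 2)) i j := by
        rw [pow_succ, Matrix.mul_apply]
        exact Finset.single_le_sum
          (f := fun m => (l ^ (n + 1)) i m * l m j)
          (fun m _ => mul_nonneg (pow_entry_nonneg l hl _ i m) (hl m j))
          (Finset.mem_univ k)
      calc (l ^ (n + 1)) i k * (A ^ (n + 1)) i k * (l k j * A k j)
          = ((l ^ (n + 1)) i k * l k j) * ((A ^ (n + 1)) i k * A k j) := by ring
        _ ≤ (l ^ (n + 2)) i j * ((A ^ (n + 1)) i k * A k j) := by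
            apply mul_le_mul_of_nonneg_right h2
            exact mul_nonneg (pow_entry_nonneg A hA _ i k) (hA k j)
    calc (∑ k, ((Matrix.hadamard l A) ^ (n + 1)) i k * (Matrix.hadamard l A) k j)
        ≤ ∑ k, (l ^ (n + 2)) i j * ((A ^ (n + 1)) i k * A k j) :=
          Finset.sum_le_sum fun k _ => key k
      _ = (l ^ (n + 2)) i j * (A ^ (n + 2)) i j := by
          rw [← Finset.mul_sum]
          congr 1

private lemma exp_entry_hasSum {d : ℕ} (X : Matrix (Fin d) (Fin d) ℝ) :
    HasSum (fun n : ℕ => ((n.factorial : ℝ))⁻¹ • X ^ n) (NormedSpace.exp X) := by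
  rw [NormedSpace.exp_eq_tsum ℝ]
  exact (NormedSpace.expSeries_summable' (𝕂 := ℝ) X).hasSum

/-- Let `l, A ∈ M_d(ℝ)` be entrywise nonnegative with `l^n ⪯ l` entrywise for every `n ≥ 1`.
Then `exp(l ⊙ A) − I_d ⪯ l ⊙ (exp(A) − I_d)` entrywise. -/
theorem exp_hadamard_sub_one_le {d : ℕ} (l A : Matrix (Fin d) (Fin d) ℝ)
    (hl : ∀ i j, 0 ≤ l i j) (hA : ∀ i j, 0 ≤ A i j)
    (hln : ∀ n : ℕ, 1 ≤ n → ∀ i j, (l ^ n) i j ≤ l i j) :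
    ∀ i j, (NormedSpace.exp (Matrix.hadamard l A) - 1) i j ≤
      (Matrix.hadamard l (NormedSpace.exp A - 1)) i j := by
  intro i j
  -- entrywise HasSum for exp of l⊙A and exp of A
  have hL : HasSum (fun n : ℕ => ((n.factorial : ℝ))⁻¹ * ((Matrix.hadamard l A) ^ n) i j)
      ((NormedSpace.exp (Matrix.hadamard l A)) i j) := by
    have := (Pi.hasSum.mp ((Pi.hasSum.mp (exp_entry_hasSum (Matrix.hadamard l A))) i)) j
    simpa [Matrix.smul_apply, smul_eq_mul] using this
  have hR : HasSum (fun n : ℕ => ((n.factorial : ℝ))⁻¹ * ((A : Matrix (Fin d) (Fin d) ℝ) ^ n) i j)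
      ((NormedSpace.exp A) i j) := by
    have := (Pi.hasSum.mp ((Pi.hasSum.mp (exp_entry_hasSum A)) i)) j
    simpa [Matrix.smul_apply, smul_eq_mul] using this
  -- subtract the `n = 0` term (which is `(1 : Matrix) i j` in both cases)
  have hL' : HasSum (fun n : ℕ =>
      (((n + 1).factorial : ℝ))⁻¹ * ((Matrix.hadamard l A) ^ (n + 1)) i j)
      ((NormedSpace.exp (Matrix.hadamard l A)) i j - (1 : Matrix (Fin d) (Fin d) ℝ) i j) := by
    have := (hasSum_nat_add_iff' (f := fun n : ℕ =>
      ((n.factorial : ℝ))⁻¹ * ((Matrix.hadamard l A) ^ n) i j) 1).mpr hL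
    simpa using this
  have hR' : HasSum (fun n : ℕ =>
      (((n + 1).factorial : ℝ))⁻¹ * ((A : Matrix (Fin d) (Fin d) ℝ) ^ (n + 1)) i j)
      ((NormedSpace.exp A) i j - (1 : Matrix (Fin d) (Fin d) ℝ) i j) := by
    have := (hasSum_nat_add_iff' (f := fun n : ℕ =>
      ((n.factorial : ℝ))⁻¹ * ((A : Matrix (Fin d) (Fin d) ℝ) ^ n) i j) 1).mpr hR
    simpa using this
  have hR'' : HasSum (fun n : ℕ =>
      l i j * ((((n + 1).factorial : ℝ))⁻¹ * ((A : Matrix (Fin d) (Fin d) ℝ) ^ (n + 1)) i j))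
      (l i j * ((NormedSpace.exp A) i j - (1 : Matrix (Fin d) (Fin d) ℝ) i j)) :=
    hR'.mul_left (l i j)
  have key : ∀ n : ℕ,
      (((n + 1).factorial : ℝ))⁻¹ * ((Matrix.hadamard l A) ^ (n + 1)) i j ≤
      l i j * ((((n + 1).factorial : ℝ))⁻¹ * ((A : Matrix (Fin d) (Fin d) ℝ) ^ (n + 1)) i j) := by
    intro n
    have h1 : ((Matrix.hadamard l A) ^ (n + 1)) i j ≤ l i j * (A ^ (n + 1)) i j := by
      refine (hadamard_pow_le l A hl hA n i j).trans ?_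
      exact mul_le_mul_of_nonneg_right (hln (n + 1) (Nat.succ_le_succ (Nat.zero_le n)) i j)
        (pow_entry_nonneg A hA _ i j)
    have hfac : (0 : ℝ) ≤ (((n + 1).factorial : ℝ))⁻¹ := by positivity
    calc (((n + 1).factorial : ℝ))⁻¹ * ((Matrix.hadamard l A) ^ (n + 1)) i j
        ≤ (((n + 1).factorial : ℝ))⁻¹ * (l i j * (A ^ (n + 1)) i j) :=
          mul_le_mul_of_nonneg_left h1 hfac
      _ = l i j * ((((n + 1).factorial : ℝ))⁻¹ * (A ^ (n + 1)) i j) := by ring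
  have hle := hL'.tsum_eq ▸ hR''.tsum_eq ▸
    Summable.tsum_le_tsum key hL'.summable hR''.summable
  calc (NormedSpace.exp (Matrix.hadamard l A) - 1) i j
      = (NormedSpace.exp (Matrix.hadamard l A)) i j - (1 : Matrix (Fin d) (Fin d) ℝ) i j := by
        simp [Matrix.sub_apply]
    _ ≤ l i j * ((NormedSpace.exp A) i j - (1 : Matrix (Fin d) (Fin d) ℝ) i j) := hle
    _ = (Matrix.hadamard l (NormedSpace.exp A - 1)) i j := by
        simp [Matrix.hadamard_apply, Matrix.sub_apply, mul_sub]
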